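/- For all reals a > 0 and b > 0: ∫₀¹ x^{a−1} (1−x)^{b−1} (log x)² dx = B(a,b) · [ (ψ₀(a) − ψ₀(a+b))² + ψ₁(a) − ψ₁(a+b) ]. -/

import Mathlib

open MeasureTheory Real

/-- The digamma function `ψ₀(x) = d/dx log Γ(x)`. -/
noncomputable def digamma (x : ℝ) : ℝ := deriv (fun y => Real.log (Real.Gamma y)) x

/-- The trigamma function `ψ₁ = ψ₀′`. -/
noncomputable def trigamma (x : ℝ) : ℝ := deriv digamma x

/-- The Beta function `B(a,b) = Γ(a)Γ(b)/Γ(a+b)`. -/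
noncomputable def betaFn (a b : ℝ) : ℝ := Real.Gamma a * Real.Gamma b / Real.Gamma (a + b)

open Set

lemma analyticAt_realGamma {x : ℝ} (hx : 0 < x) : AnalyticAt ℝ Real.Gamma x := by
  have h1 : AnalyticAt ℂ Complex.Gamma (x : ℂ) := by
    have hs : IsOpen {s : ℂ | 0 < s.re} := isOpen_lt continuous_const Complex.continuous_re
    refine DifferentiableOn.analyticAt (fun s hs' => (Complex.differentiableAt_Gamma s ?_).differentiableWithinAt) (hs.mem_nhds (by simpa using hx))
    intro m hm
    rw [hm] at hs'
    simp only [Set.mem_setOf_eq, Complex.neg_re, Complex.natCast_re] at hs'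
    have : (0:ℝ) ≤ m := Nat.cast_nonneg m
    linarith
  have key : AnalyticAt ℝ (fun y : ℝ => (Complex.Gamma (y:ℂ)).re) x :=
    (Complex.reCLM.analyticAt _).comp ((h1.restrictScalars).comp (Complex.ofRealCLM.analyticAt x))
  have heq : (fun y : ℝ => (Complex.Gamma (y:ℂ)).re) = Real.Gamma := by
    funext y; rw [Complex.Gamma_ofReal, Complex.ofReal_re]
  rwa [heq] at key

lemma contDiffOn_logGamma : ContDiffOn ℝ ⊤ (fun y => Real.log (Real.Gamma y)) (Set.Ioi 0) := by
  intro x hx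
  have hx : (0:ℝ) < x := hx
  exact (((Real.contDiffAt_log.mpr (Real.Gamma_pos_of_pos hx).ne').comp x
    (analyticAt_realGamma hx).contDiffAt)).contDiffWithinAt

lemma hasDerivAt_logGamma {x : ℝ} (hx : 0 < x) :
    HasDerivAt (fun y => Real.log (Real.Gamma y)) (digamma x) x :=
  ((contDiffOn_logGamma.differentiableOn (by simp)).differentiableAt
    (isOpen_Ioi.mem_nhds hx)).hasDerivAt

lemma contDiffOn_digamma : ContDiffOn ℝ ⊤ digamma (Set.Ioi 0) :=
  contDiffOn_logGamma.deriv_of_isOpen isOpen_Ioi le_top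

lemma hasDerivAt_digamma {x : ℝ} (hx : 0 < x) :
    HasDerivAt digamma (trigamma x) x :=
  ((contDiffOn_digamma.differentiableOn (by simp)).differentiableAt
    (isOpen_Ioi.mem_nhds hx)).hasDerivAt

section
variable {b : ℝ} (hb : 0 < b)

/-- betaFn as exp of log-gammas, on positive reals. -/
lemma betaFn_eq_exp {t : ℝ} (ht : 0 < t) (hb : 0 < b) :
    betaFn t b = Real.exp (Real.log (Real.Gamma t) + Real.log (Real.Gamma b)
      - Real.log (Real.Gamma (t + b))) := by
  have h1 := Real.Gamma_pos_of_pos ht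
  have h2 := Real.Gamma_pos_of_pos hb
  have h3 := Real.Gamma_pos_of_pos (by linarith : 0 < t + b)
  rw [Real.exp_sub, Real.exp_add, Real.exp_log h1, Real.exp_log h2, Real.exp_log h3, betaFn]

lemma hasDerivAt_betaFn {t : ℝ} (ht : 0 < t) (hb : 0 < b) :
    HasDerivAt (fun s => betaFn s b) (betaFn t b * (digamma t - digamma (t + b))) t := by
  have hL : HasDerivAt (fun s => Real.log (Real.Gamma s) + Real.log (Real.Gamma b)
      - Real.log (Real.Gamma (s + b))) (digamma t - digamma (t + b)) t := by
    have h1 := (hasDerivAt_logGamma ht).add_const (Real.log (Real.Gamma b))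
    have h2 : HasDerivAt (fun s : ℝ => Real.log (Real.Gamma (s + b))) (digamma (t + b)) t := by
      have := (hasDerivAt_logGamma (by linarith : 0 < t + b)).comp t
        ((hasDerivAt_id t).add_const b)
      simpa [Function.comp_def] using this
    exact h1.sub h2
  have hE := hL.exp
  rw [← betaFn_eq_exp ht hb] at hE
  refine hE.congr_of_eventuallyEq ?_
  filter_upwards [isOpen_Ioi.mem_nhds ht] with s hs
  exact betaFn_eq_exp hs hb

lemma hasDerivAt_betaFn' {t : ℝ} (ht : 0 < t) (hb : 0 < b) :
    HasDerivAt (fun s => betaFn s b * (digamma s - digamma (s + b)))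
      (betaFn t b * (digamma t - digamma (t + b)) * (digamma t - digamma (t + b))
        + betaFn t b * (trigamma t - trigamma (t + b))) t := by
  have hd : HasDerivAt (fun s => digamma s - digamma (s + b))
      (trigamma t - trigamma (t + b)) t := by
    have h2 : HasDerivAt (fun s : ℝ => digamma (s + b)) (trigamma (t + b)) t := by
      have := (hasDerivAt_digamma (by linarith : 0 < t + b)).comp t
        ((hasDerivAt_id t).add_const b)
      simpa [Function.comp_def] using this
    exact (hasDerivAt_digamma ht).sub h2
  exact (hasDerivAt_betaFn ht hb).mul hd
end


lemma measurable_rpow_const' (p : ℝ) : Measurable (fun x : ℝ => x ^ p) :=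
  measurable_of_continuousOn_compl_singleton 0 (continuousOn_of_forall_continuousAt
    fun x hx => Real.continuousAt_rpow_const x p (Or.inl hx))

lemma betaLog_measurable (e d : ℝ) (k : ℕ) :
    Measurable (fun x : ℝ => x ^ (e-1) * (1-x) ^ (d-1) * |Real.log x| ^ k) := by
  exact ((measurable_rpow_const' (e-1)).mul
    ((measurable_rpow_const' (d-1)).comp (measurable_const.sub measurable_id))).mul
    ((Real.measurable_log.abs).pow_const k)

/-- Integrability of the pure beta integrand. -/
lemma betaIntegrand_integrableOn {e d : ℝ} (he : 0 < e) (hd : 0 < d) :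
    IntegrableOn (fun x : ℝ => x ^ (e-1) * (1-x) ^ (d-1)) (Ioo (0:ℝ) 1) := by
  have hmeas : Measurable (fun x : ℝ => x ^ (e-1) * (1-x) ^ (d-1)) :=
    (measurable_rpow_const' (e-1)).mul
      ((measurable_rpow_const' (d-1)).comp (measurable_const.sub measurable_id))
  have hsub : Ioo (0:ℝ) 1 ⊆ Ioc 0 2⁻¹ ∪ Ioc 2⁻¹ 1 := by
    intro x hx
    rcases le_or_gt x 2⁻¹ with h | h
    · exact Or.inl ⟨hx.1, h⟩
    · exact Or.inr ⟨h, hx.2.le⟩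
  refine IntegrableOn.mono_set (IntegrableOn.union ?_ ?_) hsub
  · set M : ℝ := max 1 ((2:ℝ)⁻¹ ^ (d-1)) with hM
    have hg : IntegrableOn (fun x : ℝ => M * x ^ (e-1)) (Ioc (0:ℝ) 2⁻¹) := by
      have := intervalIntegral.intervalIntegrable_rpow' (by linarith : (-1:ℝ) < e - 1)
        (a := 0) (b := 2⁻¹)
      rw [intervalIntegrable_iff_integrableOn_Ioc_of_le (by norm_num)] at this
      exact this.const_mul M
    refine Integrable.mono' hg (hmeas.aestronglyMeasurable) ?_
    filter_upwards [ae_restrict_mem measurableSet_Ioc] with x hx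
    have hx0 : 0 < x := hx.1
    have h1x : (2:ℝ)⁻¹ ≤ 1 - x := by linarith [hx.2]
    have hb : (1-x) ^ (d-1) ≤ M := by
      rcases le_or_gt 1 d with h | h
      · exact le_max_of_le_left (Real.rpow_le_one (by linarith) (by linarith) (by linarith))
      · exact le_max_of_le_right (Real.rpow_le_rpow_of_nonpos (by norm_num) h1x (by linarith))
    rw [Real.norm_eq_abs, abs_of_nonneg (by positivity)]
    calc x ^ (e-1) * (1-x) ^ (d-1) ≤ x ^ (e-1) * M :=
          mul_le_mul_of_nonneg_left hb (by positivity)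
      _ = M * x ^ (e-1) := by ring
  · set M : ℝ := max 1 ((2:ℝ)⁻¹ ^ (e-1)) with hM
    have hg : IntegrableOn (fun x : ℝ => M * (1-x) ^ (d-1)) (Ioc (2⁻¹:ℝ) 1) := by
      have h0 : IntervalIntegrable (fun x : ℝ => x ^ (d-1)) volume 0 2⁻¹ :=
        intervalIntegral.intervalIntegrable_rpow' (by linarith)
      have h1 := (h0.comp_sub_left 1).symm
      norm_num at h1
      rw [show (1:ℝ)/2 = 2⁻¹ by norm_num,
        intervalIntegrable_iff_integrableOn_Ioc_of_le (by norm_num)] at h1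
      exact h1.const_mul M
    refine Integrable.mono' hg (hmeas.aestronglyMeasurable) ?_
    filter_upwards [ae_restrict_mem measurableSet_Ioc] with x hx
    have hx0 : (0:ℝ) < x := lt_trans (by norm_num) hx.1
    have hb : x ^ (e-1) ≤ M := by
      rcases le_or_gt 1 e with h | h
      · exact le_max_of_le_left (Real.rpow_le_one (by linarith) hx.2 (by linarith))
      · exact le_max_of_le_right (Real.rpow_le_rpow_of_nonpos (by norm_num) hx.1.le (by linarith))
    rw [Real.norm_eq_abs, abs_of_nonneg ?pos]
    case pos =>
      have : (0:ℝ) ≤ 1 - x := by linarith [hx.2]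
      positivity
    have h1x : (0:ℝ) ≤ (1-x) ^ (d-1) := Real.rpow_nonneg (by linarith [hx.2]) _
    calc x ^ (e-1) * (1-x) ^ (d-1) ≤ M * (1-x) ^ (d-1) :=
          mul_le_mul_of_nonneg_right hb h1x
      _ = M * (1-x) ^ (d-1) := rfl

lemma abs_log_pow_le {x e : ℝ} (hx0 : 0 < x) (hx1 : x < 1) (he : 0 < e) {k : ℕ} (hk : 0 < k) :
    |Real.log x| ^ k ≤ (2 * k / e) ^ k * x ^ (-(e/2)) := by
  set ε : ℝ := e / (2 * k) with hε
  have hε0 : 0 < ε := by positivity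
  have hy0 : 0 < x ^ ε := Real.rpow_pos_of_pos hx0 ε
  have key : -Real.log x ≤ ε⁻¹ * x ^ (-ε) := by
    have h1 : Real.log ((x ^ ε)⁻¹) ≤ (x ^ ε)⁻¹ - 1 :=
      Real.log_le_sub_one_of_pos (by positivity)
    rw [Real.log_inv, Real.log_rpow hx0] at h1
    have h2 : -(ε * Real.log x) ≤ (x ^ ε)⁻¹ := by linarith [hy0]
    rw [← Real.rpow_neg hx0.le] at h2
    calc -Real.log x = ε⁻¹ * (-(ε * Real.log x)) := by field_simp
      _ ≤ ε⁻¹ * x ^ (-ε) := mul_le_mul_of_nonneg_left h2 (by positivity)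
  have habs : |Real.log x| = -Real.log x := abs_of_neg (Real.log_neg hx0 hx1)
  have hnn : 0 ≤ -Real.log x := by
    rw [← habs]; exact abs_nonneg _
  calc |Real.log x| ^ k = (-Real.log x) ^ k := by rw [habs]
    _ ≤ (ε⁻¹ * x ^ (-ε)) ^ k := pow_le_pow_left₀ hnn key k
    _ = ε⁻¹ ^ k * (x ^ (-ε)) ^ k := mul_pow _ _ _
    _ = (2 * k / e) ^ k * x ^ (-(e/2)) := by
        rw [← Real.rpow_natCast (x ^ (-ε)) k, ← Real.rpow_mul hx0.le]
        congr 2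
        · rw [hε]; field_simp
        · rw [hε]; field_simp

lemma betaLog_integrableOn {e d : ℝ} (he : 0 < e) (hd : 0 < d) (k : ℕ) :
    IntegrableOn (fun x : ℝ => x ^ (e-1) * (1-x) ^ (d-1) * |Real.log x| ^ k) (Ioo (0:ℝ) 1) := by
  rcases Nat.eq_zero_or_pos k with rfl | hk
  · simpa using betaIntegrand_integrableOn he hd
  set K : ℝ := (2 * k / e) ^ k with hK
  have hg : IntegrableOn (fun x : ℝ => K * (x ^ (e/2-1) * (1-x) ^ (d-1))) (Ioo (0:ℝ) 1) :=
    (betaIntegrand_integrableOn (half_pos he) hd).const_mul K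
  refine Integrable.mono' hg (betaLog_measurable e d k).aestronglyMeasurable ?_
  filter_upwards [ae_restrict_mem measurableSet_Ioo] with x hx
  have hx0 := hx.1
  have hx1 := hx.2
  have h1x : (0:ℝ) ≤ 1 - x := by linarith
  rw [Real.norm_eq_abs, abs_of_nonneg (by positivity)]
  have h2 := abs_log_pow_le hx0 hx1 he hk
  calc x ^ (e-1) * (1-x) ^ (d-1) * |Real.log x| ^ k
      ≤ x ^ (e-1) * (1-x) ^ (d-1) * (K * x ^ (-(e/2))) :=
        mul_le_mul_of_nonneg_left h2 (by positivity)
    _ = K * (x ^ (e-1) * x ^ (-(e/2)) * (1-x) ^ (d-1)) := by ring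
    _ = K * (x ^ (e/2-1) * (1-x) ^ (d-1)) := by
        rw [← Real.rpow_add hx0, show e - 1 + -(e/2) = e/2 - 1 by ring]


lemma integral_betaIntegrand {t d : ℝ} (ht : 0 < t) (hd : 0 < d) :
    ∫ x in Ioo (0:ℝ) 1, x ^ (t-1) * (1-x) ^ (d-1) = betaFn t d := by
  have h := Complex.Gamma_mul_Gamma_eq_betaIntegral (s := (t:ℂ)) (t := (d:ℂ))
    (by simpa using ht) (by simpa using hd)
  have h2 : Complex.betaIntegral t d
      = ((∫ x in Ioo (0:ℝ) 1, x ^ (t-1) * (1-x) ^ (d-1) : ℝ) : ℂ) := by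
    rw [Complex.betaIntegral, intervalIntegral.integral_of_le zero_le_one,
      integral_Ioc_eq_integral_Ioo]
    calc ∫ x in Ioo (0:ℝ) 1, (x:ℂ) ^ ((t:ℂ)-1) * (1-(x:ℂ)) ^ ((d:ℂ)-1)
        = ∫ x in Ioo (0:ℝ) 1, ((x ^ (t-1) * (1-x) ^ (d-1) : ℝ) : ℂ) := by
          refine setIntegral_congr_fun measurableSet_Ioo (fun x hx => ?_)
          rw [Complex.ofReal_mul, Complex.ofReal_cpow hx.1.le,
            Complex.ofReal_cpow (by linarith [hx.2] : (0:ℝ) ≤ 1 - x)]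
          push_cast
          ring
      _ = _ := integral_ofReal
  rw [h2] at h
  have h3 : Complex.Gamma ((t:ℂ) + (d:ℂ)) ≠ 0 := by
    rw [← Complex.ofReal_add, Complex.Gamma_ofReal]
    exact_mod_cast (Real.Gamma_pos_of_pos (by linarith)).ne'
  have h4 : ((∫ x in Ioo (0:ℝ) 1, x ^ (t-1) * (1-x) ^ (d-1) : ℝ) : ℂ)
      = ((betaFn t d : ℝ) : ℂ) := by
    rw [betaFn]
    push_cast
    rw [← Complex.Gamma_ofReal, ← Complex.Gamma_ofReal, ← Complex.Gamma_ofReal]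
    push_cast
    rw [eq_div_iff h3]
    rw [h]
    ring
  exact_mod_cast h4

lemma hasDerivAt_betaLogIntegral {t d : ℝ} (ht : 0 < t) (hd : 0 < d) (k : ℕ) :
    HasDerivAt (fun s => ∫ x in Ioo (0:ℝ) 1, x ^ (s-1) * (1-x) ^ (d-1) * (Real.log x) ^ k)
      (∫ x in Ioo (0:ℝ) 1, x ^ (t-1) * (1-x) ^ (d-1) * (Real.log x) ^ (k+1)) t := by
  have hmeas : ∀ s : ℝ, ∀ j : ℕ, AEStronglyMeasurable
      (fun x : ℝ => x ^ (s-1) * (1-x) ^ (d-1) * (Real.log x) ^ j)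
      (volume.restrict (Ioo (0:ℝ) 1)) := by
    intro s j
    exact (((measurable_rpow_const' (s-1)).mul
      ((measurable_rpow_const' (d-1)).comp (measurable_const.sub measurable_id))).mul
      (Real.measurable_log.pow_const j)).aestronglyMeasurable
  have habs : ∀ s : ℝ, ∀ j : ℕ, ∀ x ∈ Ioo (0:ℝ) 1,
      ‖x ^ (s-1) * (1-x) ^ (d-1) * (Real.log x) ^ j‖
        = x ^ (s-1) * (1-x) ^ (d-1) * |Real.log x| ^ j := by
    intro s j x hx
    rw [Real.norm_eq_abs, abs_mul, abs_mul, abs_pow,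
      abs_of_nonneg (Real.rpow_nonneg hx.1.le _),
      abs_of_nonneg (Real.rpow_nonneg (by linarith [hx.2]) _)]
  have hint : ∀ s : ℝ, 0 < s → ∀ j : ℕ, Integrable
      (fun x : ℝ => x ^ (s-1) * (1-x) ^ (d-1) * (Real.log x) ^ j)
      (volume.restrict (Ioo (0:ℝ) 1)) := by
    intro s hs j
    refine Integrable.mono' (betaLog_integrableOn hs hd j) (hmeas s j) ?_
    filter_upwards [ae_restrict_mem measurableSet_Ioo] with x hx
    rw [habs s j x hx]
  have key := hasDerivAt_integral_of_dominated_loc_of_deriv_le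
    (F := fun s x => x ^ (s-1) * (1-x) ^ (d-1) * (Real.log x) ^ k)
    (F' := fun s x => x ^ (s-1) * (1-x) ^ (d-1) * (Real.log x) ^ (k+1))
    (x₀ := t) (s := Metric.ball t (t/2))
    (bound := fun x => x ^ (t/2-1) * (1-x) ^ (d-1) * |Real.log x| ^ (k+1))
    (Metric.ball_mem_nhds t (half_pos ht)) (Filter.Eventually.of_forall (fun s => hmeas s k)) (hint t ht k)
    (hmeas t (k+1)) ?_ (betaLog_integrableOn (half_pos ht) hd (k+1)) ?_
  · exact key.2
  · filter_upwards [ae_restrict_mem measurableSet_Ioo] with x hx s hs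
    rw [habs s (k+1) x hx]
    have hx0 := hx.1
    have hst : t/2 - 1 ≤ s - 1 := by
      have := abs_sub_lt_iff.mp (mem_ball_iff_norm.mp hs)
      linarith [this.1, this.2]
    have hrp : x ^ (s-1) ≤ x ^ (t/2-1) :=
      Real.rpow_le_rpow_of_exponent_ge hx0 hx.2.le hst
    have h1 : (0:ℝ) ≤ (1-x) ^ (d-1) := Real.rpow_nonneg (by linarith [hx.2]) _
    have h2 : (0:ℝ) ≤ |Real.log x| ^ (k+1) := by positivity
    calc x ^ (s-1) * (1-x) ^ (d-1) * |Real.log x| ^ (k+1)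
        ≤ x ^ (t/2-1) * (1-x) ^ (d-1) * |Real.log x| ^ (k+1) := by
          apply mul_le_mul_of_nonneg_right _ h2
          exact mul_le_mul_of_nonneg_right hrp h1
      _ = _ := rfl
  · filter_upwards [ae_restrict_mem measurableSet_Ioo] with x hx s hs
    have hx0 := hx.1
    have hbase : HasDerivAt (fun u : ℝ => x ^ (u-1)) (x ^ (s-1) * Real.log x) s := by
      have h0 := (Real.hasStrictDerivAt_const_rpow hx0 (s-1)).hasDerivAt
      have := h0.comp s ((hasDerivAt_id s).sub_const 1)
      simpa [Function.comp_def] using this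
    have := (hbase.mul_const ((1-x) ^ (d-1))).mul_const ((Real.log x) ^ k)
    convert this using 1
    · rfl
    ring

theorem beta_log_sq_integral (a b : ℝ) (ha : 0 < a) (hb : 0 < b) :
    ∫ x in Set.Ioo (0 : ℝ) 1, x ^ (a - 1) * (1 - x) ^ (b - 1) * (Real.log x) ^ 2
      = betaFn a b * ((digamma a - digamma (a + b)) ^ 2 + trigamma a - trigamma (a + b)) := by
  have hF1 : ∀ t : ℝ, 0 < t →
      (∫ x in Ioo (0:ℝ) 1, x ^ (t-1) * (1-x) ^ (b-1) * (Real.log x) ^ 1)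
        = betaFn t b * (digamma t - digamma (t + b)) := by
    intro t ht
    have h1 := hasDerivAt_betaLogIntegral ht hb 0
    have h2 := hasDerivAt_betaFn ht hb
    have heq : (fun s => betaFn s b) =ᶠ[nhds t]
        (fun s => ∫ x in Ioo (0:ℝ) 1, x ^ (s-1) * (1-x) ^ (b-1) * (Real.log x) ^ 0) := by
      filter_upwards [isOpen_Ioi.mem_nhds ht] with s hs
      rw [← integral_betaIntegrand hs hb]
      simp
    simpa using (h1.congr_of_eventuallyEq heq).unique h2
  have h3 := hasDerivAt_betaLogIntegral ha hb 1
  have h4 := hasDerivAt_betaFn' ha hb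
  have heq2 : (fun s => betaFn s b * (digamma s - digamma (s + b))) =ᶠ[nhds a]
      (fun s => ∫ x in Ioo (0:ℝ) 1, x ^ (s-1) * (1-x) ^ (b-1) * (Real.log x) ^ 1) := by
    filter_upwards [isOpen_Ioi.mem_nhds ha] with s hs
    exact (hF1 s hs).symm
  have hfin := (h3.congr_of_eventuallyEq heq2).unique h4
  rw [show (1:ℕ) + 1 = 2 by norm_num] at hfin
  rw [hfin]
  ring
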